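/- In the two-dimensional dynamical source construction, for every n ≥ 1 the pair (X_n, Y_n) has joint distribution P_XY, and X_n is statistically independent of the random vector (Y_1, …, Y_{n−1}). -/

import Mathlib

open MeasureTheory ProbabilityTheory Filter

/-- The left endpoint of the `j`-th partition interval: the cumulative mass of the indices
preceding `j`.  The `j`-th open interval of the partition is `(cum p j, cum p j + p j)`. -/
noncomputable def cum {m : ℕ} (p : Fin m → ℝ) (j : Fin m) : ℝ :=
  ∑ j' ∈ Finset.univ.filter (fun j' => j' < j), p j'

namespace Stmt3Aux

lemma cum_nonneg {m : ℕ} {p : Fin m → ℝ} (hp : ∀ j, 0 ≤ p j) (i : Fin m) : 0 ≤ cum p i :=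
  Finset.sum_nonneg fun j _ => hp j

lemma cum_add_sum {m : ℕ} (p : Fin m → ℝ) (i : Fin m) :
    cum p i + p i = ∑ j ∈ Finset.univ.filter (fun j => j ≤ i), p j := by
  have h : Finset.univ.filter (fun j => j ≤ i) = insert i (Finset.univ.filter (fun j => j < i)) := by
    ext j
    simp only [Finset.mem_filter, Finset.mem_univ, true_and, Finset.mem_insert]
    rw [Fin.le_def, Fin.lt_def, Fin.ext_iff]
    omega
  rw [h, Finset.sum_insert (by simp), cum, add_comm]

lemma cum_add_le {m : ℕ} {p : Fin m → ℝ} (hp : ∀ j, 0 ≤ p j) {i i' : Fin m} (h : i < i') :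
    cum p i + p i ≤ cum p i' := by
  rw [cum_add_sum, cum]
  apply Finset.sum_le_sum_of_subset_of_nonneg
  · intro j hj
    simp only [Finset.mem_filter, Finset.mem_univ, true_and] at *
    exact lt_of_le_of_lt hj h
  · exact fun j _ _ => hp j

lemma cum_add_le_one {m : ℕ} {p : Fin m → ℝ} (hp : ∀ j, 0 ≤ p j) (hp1 : ∑ j, p j = 1)
    (i : Fin m) : cum p i + p i ≤ 1 := by
  rw [cum_add_sum, ← hp1]
  exact Finset.sum_le_sum_of_subset_of_nonneg (Finset.filter_subset _ _) fun j _ _ => hp j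

lemma cell_subset {m : ℕ} {p : Fin m → ℝ} (hp : ∀ j, 0 ≤ p j) (hp1 : ∑ j, p j = 1)
    (i : Fin m) : Set.Ioo (cum p i) (cum p i + p i) ⊆ Set.Ioo (0:ℝ) 1 := fun x hx =>
  ⟨lt_of_le_of_lt (cum_nonneg hp i) hx.1, lt_of_lt_of_le hx.2 (cum_add_le_one hp hp1 i)⟩

lemma cell_eq {m : ℕ} {p : Fin m → ℝ} (hp : ∀ j, 0 ≤ p j) {x : ℝ} {i i' : Fin m}
    (h : x ∈ Set.Ioo (cum p i) (cum p i + p i))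
    (h' : x ∈ Set.Ioo (cum p i') (cum p i' + p i')) : i = i' := by
  rcases lt_trichotomy i i' with hlt | heq | hgt
  · exfalso; have := cum_add_le hp hlt; have := h.2; have := h'.1; linarith
  · exact heq
  · exfalso; have := cum_add_le hp hgt; have := h'.2; have := h.1; linarith

lemma cell_pos {m : ℕ} {p : Fin m → ℝ} {x : ℝ} {i : Fin m}
    (h : x ∈ Set.Ioo (cum p i) (cum p i + p i)) : 0 < p i := by
  have := h.1; have := h.2; linarith

lemma map_affine (s t α β : ℝ) (hs : 0 < s) (hαβ : α ≤ β) :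
    Measure.map (fun x => t + s * (x - α)) (volume.restrict (Set.Ioo α β))
      = ENNReal.ofReal s⁻¹ • volume.restrict (Set.Ioo t (t + s * (β - α))) := by
  have hf : (fun x : ℝ => t + s * (x - α)) = (fun x => (t - s * α) + x) ∘ (fun x => s * x) := by
    funext x; simp only [Function.comp_apply]; ring
  have hmap : Measure.map (fun x : ℝ => t + s * (x - α)) volume
      = ENNReal.ofReal s⁻¹ • (volume : Measure ℝ) := by
    rw [hf, ← Measure.map_map (by fun_prop) (by fun_prop)]
    have h1 : Measure.map (fun x : ℝ => s * x) volume = ENNReal.ofReal s⁻¹ • volume := by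
      simpa [abs_of_pos (inv_pos.2 hs)] using Real.map_volume_mul_left hs.ne'
    rw [h1, Measure.map_smul, map_add_left_eq_self]
  have hpre : (fun x : ℝ => t + s * (x - α)) ⁻¹' Set.Ioo t (t + s * (β - α)) = Set.Ioo α β := by
    ext x
    simp only [Set.mem_preimage, Set.mem_Ioo]
    constructor
    · rintro ⟨h1, h2⟩; constructor <;> nlinarith
    · rintro ⟨h1, h2⟩; constructor <;> nlinarith
  have hm : Measurable fun x : ℝ => t + s * (x - α) := by fun_prop
  rw [← hpre, ← Measure.restrict_map hm measurableSet_Ioo, hmap, Measure.restrict_smul]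

lemma smul_prod {α β : Type*} [MeasurableSpace α] [MeasurableSpace β] (c : ENNReal)
    (μ : Measure α) (ν : Measure β) [SFinite μ] [SFinite ν] :
    (c • μ).prod ν = c • (μ.prod ν) := by
  ext s hs
  rw [Measure.prod_apply hs, Measure.smul_apply, Measure.prod_apply hs, lintegral_smul_measure,
    smul_eq_mul]

lemma prod_smul {α β : Type*} [MeasurableSpace α] [MeasurableSpace β] (c : ENNReal)
    (μ : Measure α) (ν : Measure β) [SFinite μ] [SFinite ν] :
    μ.prod (c • ν) = c • (μ.prod ν) := by
  ext s hs
  rw [Measure.prod_apply hs, Measure.smul_apply, Measure.prod_apply hs]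
  simp only [Measure.smul_apply, smul_eq_mul]
  rw [lintegral_const_mul _ (measurable_measure_prodMk_left hs)]

lemma map_affine2 (s1 t1 α1 β1 s2 t2 α2 β2 : ℝ) (hs1 : 0 < s1) (hs2 : 0 < s2)
    (h1 : α1 ≤ β1) (h2 : α2 ≤ β2) :
    Measure.map (fun q : ℝ × ℝ => (t1 + s1 * (q.1 - α1), t2 + s2 * (q.2 - α2)))
        (volume.restrict (Set.Ioo α1 β1 ×ˢ Set.Ioo α2 β2))
      = ENNReal.ofReal (s1⁻¹ * s2⁻¹) •
        volume.restrict (Set.Ioo t1 (t1 + s1 * (β1 - α1)) ×ˢ Set.Ioo t2 (t2 + s2 * (β2 - α2))) := by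
  have heq : (fun q : ℝ × ℝ => (t1 + s1 * (q.1 - α1), t2 + s2 * (q.2 - α2)))
      = Prod.map (fun x => t1 + s1 * (x - α1)) (fun x => t2 + s2 * (x - α2)) := rfl
  rw [heq, Measure.volume_eq_prod, ← Measure.prod_restrict,
    ← Measure.map_prod_map _ _ (by fun_prop) (by fun_prop),
    map_affine _ _ _ _ hs1 h1, map_affine _ _ _ _ hs2 h2, smul_prod, prod_smul,
    Measure.prod_restrict, ← Measure.volume_eq_prod, smul_smul, ← ENNReal.ofReal_mul (by positivity)]

lemma partition_strips {m : ℕ} (p : Fin m → ℝ) (hp0 : ∀ i, 0 ≤ p i) (hp1 : ∑ i, p i = 1) :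
    ∑ i : Fin m, volume.restrict ((Set.Ioo (cum p i) (cum p i + p i)) ×ˢ Set.Ioo (0:ℝ) 1)
      = volume.restrict (Set.Ioo (0:ℝ) 1 ×ˢ Set.Ioo (0:ℝ) 1) := by
  set S : Fin m → Set (ℝ × ℝ) := fun i => (Set.Ioo (cum p i) (cum p i + p i)) ×ˢ Set.Ioo (0:ℝ) 1
    with hS
  have hSm : ∀ i, MeasurableSet (S i) := fun i => measurableSet_Ioo.prod measurableSet_Ioo
  have hd : Pairwise (Function.onFun Disjoint S) := by
    intro i i' hii'
    rw [Function.onFun, Set.disjoint_left]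
    rintro ⟨x, y⟩ hx hx'
    exact hii' (cell_eq hp0 hx.1 hx'.1)
  have hsub : ∀ i, S i ⊆ Set.Ioo (0:ℝ) 1 ×ˢ Set.Ioo (0:ℝ) 1 := fun i =>
    Set.prod_mono (cell_subset hp0 hp1 i) le_rfl
  have hvol : ∀ i, volume (S i) = ENNReal.ofReal (p i) := by
    intro i
    have hlen : cum p i + p i - cum p i = p i := by ring
    rw [hS]
    simp [Measure.volume_eq_prod, Measure.prod_prod, Real.volume_Ioo, hlen]
  have hUvol : volume (⋃ i, S i) = 1 := by
    rw [measure_iUnion hd hSm]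
    rw [tsum_fintype]
    simp_rw [hvol]
    rw [← ENNReal.ofReal_sum_of_nonneg (fun i _ => hp0 i), hp1, ENNReal.ofReal_one]
  have hsq : volume (Set.Ioo (0:ℝ) 1 ×ˢ Set.Ioo (0:ℝ) 1) = 1 := by
    rw [Measure.volume_eq_prod, Measure.prod_prod]
    simp
  have hae : (⋃ i, S i) =ᵐ[volume] (Set.Ioo (0:ℝ) 1 ×ˢ Set.Ioo (0:ℝ) 1) := by
    apply ae_eq_of_subset_of_measure_ge (Set.iUnion_subset hsub) (le_of_eq (hsq.trans hUvol.symm))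
      (MeasurableSet.iUnion hSm).nullMeasurableSet
    rw [hsq]; exact ENNReal.one_ne_top
  rw [← Measure.restrict_congr_set hae, Measure.restrict_iUnion hd hSm, Measure.sum_fintype]

lemma map_restrict_iUnion {Ω γ : Type*} [MeasurableSpace Ω] [MeasurableSpace γ]
    {ι : Type*} [Fintype ι] (P : Measure Ω) {f : Ω → γ} (hf : Measurable f)
    {A : ι → Set Ω} (hA : ∀ i, MeasurableSet (A i)) (hd : Pairwise (Function.onFun Disjoint A)) :
    Measure.map f (P.restrict (⋃ i, A i)) = ∑ i, Measure.map f (P.restrict (A i)) := by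
  ext s hs
  rw [Measure.map_apply hf hs, Measure.restrict_apply (hf hs), Measure.finset_sum_apply,
    Set.inter_iUnion]
  have hd' : Pairwise (Function.onFun Disjoint (fun i => f ⁻¹' s ∩ A i)) := fun i j hij =>
    ((hd hij).mono Set.inter_subset_right Set.inter_subset_right)
  rw [measure_iUnion hd' (fun i => (hf hs).inter (hA i)), tsum_fintype]
  refine Finset.sum_congr rfl fun i _ => ?_
  rw [Measure.map_apply hf hs, Measure.restrict_apply (hf hs)]

end Stmt3Aux


/-- Lemma 3(b) of the paper, for the two-dimensional dynamical source construction driven by a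
uniform initial state on the open unit square: for every `n` the pair `(X n, Y n)` has joint
distribution `PXY`, and `X n` is independent of the past source symbols `(Y 0, …, Y (n-1))`.
(Indices are 0-based: `Θ 0` is the paper's `Θ₁`, etc.) -/
theorem stmt_3
    {Ω : Type*} [MeasurableSpace Ω] (P : Measure Ω) [IsProbabilityMeasure P]
    {a b c : ℕ}
    (PXY : Fin a × Fin b → ℝ)
    (hPXY0 : ∀ q, 0 ≤ PXY q) (hPXY1 : ∑ q : Fin a × Fin b, PXY q = 1)
    (PX : Fin a → ℝ) (hPX : ∀ i, PX i = ∑ k, PXY (i, k))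
    (PY : Fin b → ℝ) (hPY : ∀ k, PY k = ∑ i, PXY (i, k))
    (PZ : Fin c → ℝ) (hPZ0 : ∀ j, 0 ≤ PZ j) (hPZ1 : ∑ j, PZ j = 1)
    (ξ : Fin a × Fin c → Fin b)
    (hξ : ∀ i k, ∑ j ∈ Finset.univ.filter (fun j => ξ (i, j) = k), PX i * PZ j = PXY (i, k))
    (T0 : ℝ → Fin b → ℝ)
    (hT0 : ∀ (k : Fin b) (i : Fin a), 0 < PX i →
      ∀ θ ∈ Set.Icc (cum PX i) (cum PX i + PX i),
        T0 θ k = (∑ i' ∈ Finset.univ.filter (fun i' => i' < i), PXY (i', k)) / PY k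
          + (θ - cum PX i) * (PXY (i, k) / (PY k * PX i)))
    (T1 : ℝ → ℝ)
    (hT1 : ∀ j : Fin c, ∀ φ ∈ Set.Ioo (cum PZ j) (cum PZ j + PZ j),
      T1 φ = (φ - cum PZ j) / PZ j)
    (Θ Φ : ℕ → Ω → ℝ) (X : ℕ → Ω → Fin a) (Z : ℕ → Ω → Fin c) (Y : ℕ → Ω → Fin b)
    (hΘm : ∀ n, Measurable (Θ n)) (hΦm : ∀ n, Measurable (Φ n))
    (hXm : ∀ n, Measurable (X n)) (hZm : ∀ n, Measurable (Z n))
    (hinit : Measure.map (fun ω => (Θ 0 ω, Φ 0 ω)) P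
      = volume.restrict (Set.Ioo (0:ℝ) 1 ×ˢ Set.Ioo (0:ℝ) 1))
    (hXdef : ∀ n, ∀ᵐ ω ∂P, Θ n ω ∈ Set.Ioo (cum PX (X n ω)) (cum PX (X n ω) + PX (X n ω)))
    (hZdef : ∀ n, ∀ᵐ ω ∂P, Φ n ω ∈ Set.Ioo (cum PZ (Z n ω)) (cum PZ (Z n ω) + PZ (Z n ω)))
    (hYdef : ∀ n ω, Y n ω = ξ (X n ω, Z n ω))
    (hΘrec : ∀ n, ∀ᵐ ω ∂P, Θ (n + 1) ω = T0 (Θ n ω) (Y n ω))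
    (hΦrec : ∀ n, ∀ᵐ ω ∂P, Φ (n + 1) ω = T1 (Φ n ω))
    :
    (∀ n i k, P {ω | X n ω = i ∧ Y n ω = k} = ENNReal.ofReal (PXY (i, k))) ∧
    (∀ n : ℕ, IndepFun (X n) (fun ω (l : Fin n) => Y l.val ω) P) := by
  
  classical
  open Stmt3Aux in
  set unif : Measure (ℝ × ℝ) := volume.restrict (Set.Ioo (0:ℝ) 1 ×ˢ Set.Ioo (0:ℝ) 1) with hunif
  have hPX0 : ∀ i, 0 ≤ PX i := fun i => (hPX i) ▸ Finset.sum_nonneg fun k _ => hPXY0 _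
  have hPY0 : ∀ k, 0 ≤ PY k := fun k => (hPY k) ▸ Finset.sum_nonneg fun i _ => hPXY0 _
  have hPX1 : ∑ i, PX i = 1 := by
    simp_rw [hPX]; rw [← hPXY1, ← Fintype.sum_prod_type]
  have hPXY_le_PX : ∀ i k, PXY (i, k) ≤ PX i := fun i k =>
    (hPX i) ▸ Finset.single_le_sum (fun k _ => hPXY0 (i, k)) (Finset.mem_univ k)
  have hPXY_le_PY : ∀ i k, PXY (i, k) ≤ PY k := fun i k =>
    (hPY k) ▸ Finset.single_le_sum (fun i _ => hPXY0 (i, k)) (Finset.mem_univ i)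
  have hYm : ∀ n, Measurable (Y n) := by
    intro n
    have h : Y n = fun ω => ξ (X n ω, Z n ω) := funext (hYdef n)
    rw [h]
    exact (measurable_of_countable ξ).comp ((hXm n).prodMk (hZm n))
  -- the cells
  set IX : Fin a → Set ℝ := fun i => Set.Ioo (cum PX i) (cum PX i + PX i) with hIX
  set JZ : Fin c → Set ℝ := fun j => Set.Ioo (cum PZ j) (cum PZ j + PZ j) with hJZ
  have hXae : ∀ n, ∀ᵐ ω ∂P, ∀ i, X n ω = i ↔ Θ n ω ∈ IX i := by
    intro n
    filter_upwards [hXdef n] with ω hω i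
    exact ⟨fun h => h ▸ hω, fun hi => Stmt3Aux.cell_eq hPX0 hω hi⟩
  have hZae : ∀ n, ∀ᵐ ω ∂P, ∀ j, Z n ω = j ↔ Φ n ω ∈ JZ j := by
    intro n
    filter_upwards [hZdef n] with ω hω j
    exact ⟨fun h => h ▸ hω, fun hj => Stmt3Aux.cell_eq hPZ0 hω hj⟩
  have hGm : ∀ n, Measurable (fun ω => (Θ n ω, Φ n ω)) := fun n => (hΘm n).prodMk (hΦm n)
  have hcellsub : ∀ i j, IX i ×ˢ JZ j ⊆ Set.Ioo (0:ℝ) 1 ×ˢ Set.Ioo (0:ℝ) 1 := fun i j =>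
    Set.prod_mono (Stmt3Aux.cell_subset hPX0 hPX1 i) (Stmt3Aux.cell_subset hPZ0 hPZ1 j)
  have hSmeasAll : ∀ (n : ℕ) (i : Fin a) (j : Fin c),
      MeasurableSet {ω | X n ω = i ∧ Z n ω = j} := by
    intro n i j
    have h : {ω | X n ω = i ∧ Z n ω = j} = X n ⁻¹' {i} ∩ Z n ⁻¹' {j} := rfl
    rw [h]
    exact ((hXm n) (measurableSet_singleton i)).inter ((hZm n) (measurableSet_singleton j))
  -- the key one-step lemma
  have step : ∀ n (Ev : Set Ω), MeasurableSet Ev →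
      Measure.map (fun ω => (Θ n ω, Φ n ω)) (P.restrict Ev) = P Ev • unif →
      ∀ k, Measure.map (fun ω => (Θ (n+1) ω, Φ (n+1) ω)) (P.restrict (Ev ∩ {ω | Y n ω = k}))
        = P (Ev ∩ {ω | Y n ω = k}) • unif := by
    intro n Ev hEv hmapE k
    set qk : Fin a → ℝ := fun i => PXY (i, k) / PY k with hqk
    have hSmeas : ∀ (i : Fin a) (j : Fin c), MeasurableSet {ω | X n ω = i ∧ Z n ω = j} := by
      intro i j
      have h : {ω | X n ω = i ∧ Z n ω = j} = X n ⁻¹' {i} ∩ Z n ⁻¹' {j} := rfl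
      rw [h]
      exact ((hXm n) (measurableSet_singleton i)).inter ((hZm n) (measurableSet_singleton j))
    have hnullS : ∀ i j, (PX i = 0 ∨ PZ j = 0) → P {ω | X n ω = i ∧ Z n ω = j} = 0 := by
      intro i j hij
      rw [measure_eq_zero_iff_ae_notMem]
      filter_upwards [hXdef n, hZdef n] with ω h1 h2
      rintro ⟨rfl, rfl⟩
      rcases hij with h | h
      · have := Stmt3Aux.cell_pos h1; linarith
      · have := Stmt3Aux.cell_pos h2; linarith
    have hPXYpos : ∀ i j, ξ (i, j) = k → 0 < PX i → 0 < PZ j → 0 < PXY (i, k) := by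
      intro i j hξk hi hj
      have hterm : PX i * PZ j ≤ PXY (i, k) := by
        rw [← hξ i k]
        exact Finset.single_le_sum (f := fun j => PX i * PZ j)
          (fun j' _ => mul_nonneg hi.le (hPZ0 j')) (by simp [hξk])
      nlinarith
    by_cases hPYk0 : PY k = 0
    · have hY0 : P {ω | Y n ω = k} = 0 := by
        rw [measure_eq_zero_iff_ae_notMem]
        filter_upwards [hXdef n, hZdef n] with ω h1 h2 hmem
        have hXpos := Stmt3Aux.cell_pos h1
        have hZpos := Stmt3Aux.cell_pos h2
        have hpos : 0 < PXY (X n ω, k) :=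
          hPXYpos _ _ (by rw [← hYdef n ω]; exact hmem) hXpos hZpos
        have := hPXY_le_PY (X n ω) k
        linarith
      have h0 : P (Ev ∩ {ω | Y n ω = k}) = 0 :=
        measure_mono_null Set.inter_subset_right hY0
      rw [Measure.restrict_eq_zero.mpr h0, Measure.map_zero, h0, zero_smul]
    have hPYk : 0 < PY k := lt_of_le_of_ne (hPY0 k) (Ne.symm hPYk0)
    -- the per-cell computation
    have piece : ∀ (i : Fin a) (j : Fin c), ξ (i, j) = k →
        Measure.map (fun ω => (Θ (n+1) ω, Φ (n+1) ω))
            (P.restrict (Ev ∩ {ω | X n ω = i ∧ Z n ω = j}))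
          = (P Ev * ENNReal.ofReal (PX i * PZ j * PY k / PXY (i, k))) •
              volume.restrict (Set.Ioo (cum qk i) (cum qk i + qk i) ×ˢ Set.Ioo (0:ℝ) 1) := by
      intro i j hξk
      by_cases hdeg : PX i = 0 ∨ PZ j = 0
      · have h0 : P (Ev ∩ {ω | X n ω = i ∧ Z n ω = j}) = 0 :=
          measure_mono_null Set.inter_subset_right (hnullS i j hdeg)
        have hc0 : PX i * PZ j * PY k / PXY (i, k) = 0 := by
          rcases hdeg with h | h <;> simp [h]
        rw [Measure.restrict_eq_zero.mpr h0, Measure.map_zero, hc0, ENNReal.ofReal_zero,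
          mul_zero, zero_smul]
      push_neg at hdeg
      have hPXi : 0 < PX i := lt_of_le_of_ne (hPX0 i) (Ne.symm hdeg.1)
      have hPZj : 0 < PZ j := lt_of_le_of_ne (hPZ0 j) (Ne.symm hdeg.2)
      have hPXYik : 0 < PXY (i, k) := hPXYpos i j hξk hPXi hPZj
      set s1 : ℝ := PXY (i, k) / (PY k * PX i) with hs1def
      have hs1 : 0 < s1 := div_pos hPXYik (mul_pos hPYk hPXi)
      set t1 : ℝ := (∑ i' ∈ Finset.univ.filter (fun i' => i' < i), PXY (i', k)) / PY k with ht1def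
      set A : ℝ × ℝ → ℝ × ℝ :=
        fun q => (t1 + s1 * (q.1 - cum PX i), 0 + (PZ j)⁻¹ * (q.2 - cum PZ j)) with hA
      have hAm : Measurable A := by
        apply Measurable.prod <;> simp only [hA] <;> fun_prop
      have hcellm : MeasurableSet (IX i ×ˢ JZ j) := by
        rw [hIX, hJZ]; exact measurableSet_Ioo.prod measurableSet_Ioo
      have hmem : ∀ᵐ ω ∂(P.restrict (Ev ∩ {ω | X n ω = i ∧ Z n ω = j})),
          ω ∈ Ev ∩ {ω | X n ω = i ∧ Z n ω = j} :=
        ae_restrict_mem (hEv.inter (hSmeas i j))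
      have haeF : (fun ω => (Θ (n+1) ω, Φ (n+1) ω))
          =ᵐ[P.restrict (Ev ∩ {ω | X n ω = i ∧ Z n ω = j})]
          (A ∘ fun ω => (Θ n ω, Φ n ω)) := by
        filter_upwards [ae_restrict_of_ae (hΘrec n), ae_restrict_of_ae (hΦrec n),
          ae_restrict_of_ae (hXdef n), ae_restrict_of_ae (hZdef n), hmem] with ω e1 e2 e3 e4 hω
        obtain ⟨hω1, hω2, hω3⟩ := hω
        have hYk : Y n ω = k := by rw [hYdef n ω, hω2, hω3, hξk]
        have hθ : Θ n ω ∈ Set.Icc (cum PX i) (cum PX i + PX i) :=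
          Set.Ioo_subset_Icc_self (by rw [← hω2]; exact e3)
        have hφ : Φ n ω ∈ Set.Ioo (cum PZ j) (cum PZ j + PZ j) := by rw [← hω3]; exact e4
        show (Θ (n+1) ω, Φ (n+1) ω) = A (Θ n ω, Φ n ω)
        rw [e1, e2, hYk, hT0 k i hPXi _ hθ, hT1 j _ hφ]
        simp only [hA]
        refine Prod.ext ?_ ?_
        · simp only []
          rw [ht1def, hs1def]; ring
        · simp only []
          ring
      have hνeq : P.restrict (Ev ∩ {ω | X n ω = i ∧ Z n ω = j})
          = (P.restrict Ev).restrict ((fun ω => (Θ n ω, Φ n ω)) ⁻¹' (IX i ×ˢ JZ j)) := by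
        rw [Measure.restrict_restrict ((hGm n) hcellm), Set.inter_comm]
        apply Measure.restrict_congr_set
        rw [Filter.eventuallyEq_set]
        filter_upwards [hXae n, hZae n] with ω h1 h2
        simp only [Set.mem_inter_iff, Set.mem_preimage, Set.mem_prod, Set.mem_setOf_eq]
        rw [h1 i, h2 j]
      have hmapν : Measure.map (fun ω => (Θ n ω, Φ n ω))
          (P.restrict (Ev ∩ {ω | X n ω = i ∧ Z n ω = j}))
          = P Ev • volume.restrict (IX i ×ˢ JZ j) := by
        rw [hνeq, ← Measure.restrict_map (hGm n) hcellm, hmapE, Measure.restrict_smul, hunif,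
          Measure.restrict_restrict hcellm, Set.inter_eq_self_of_subset_left (hcellsub i j)]
      have hkey : Measure.map A (volume.restrict (IX i ×ˢ JZ j))
          = ENNReal.ofReal (PX i * PZ j * PY k / PXY (i, k)) •
              volume.restrict (Set.Ioo (cum qk i) (cum qk i + qk i) ×ˢ Set.Ioo (0:ℝ) 1) := by
        rw [hIX, hJZ, hA]
        rw [Stmt3Aux.map_affine2 s1 t1 (cum PX i) (cum PX i + PX i) (PZ j)⁻¹ 0 (cum PZ j)
          (cum PZ j + PZ j) hs1 (inv_pos.2 hPZj) (by linarith) (by linarith)]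
        have h1 : t1 = cum qk i := by
          rw [ht1def, cum, hqk]
          rw [Finset.sum_div]
        have h2 : t1 + s1 * (cum PX i + PX i - cum PX i) = cum qk i + qk i := by
          rw [h1, hqk, hs1def]
          have : cum PX i + PX i - cum PX i = PX i := by ring
          rw [this]
          field_simp
        have h3 : (0:ℝ) + (PZ j)⁻¹ * (cum PZ j + PZ j - cum PZ j) = 1 := by
          field_simp
          ring
        have h4 : s1⁻¹ * ((PZ j)⁻¹)⁻¹ = PX i * PZ j * PY k / PXY (i, k) := by
          rw [hs1def, inv_inv]
          field_simp
        rw [h2, h3, h4, h1]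
      calc Measure.map (fun ω => (Θ (n+1) ω, Φ (n+1) ω))
            (P.restrict (Ev ∩ {ω | X n ω = i ∧ Z n ω = j}))
          = Measure.map (A ∘ fun ω => (Θ n ω, Φ n ω))
              (P.restrict (Ev ∩ {ω | X n ω = i ∧ Z n ω = j})) := Measure.map_congr haeF
        _ = Measure.map A (Measure.map (fun ω => (Θ n ω, Φ n ω))
              (P.restrict (Ev ∩ {ω | X n ω = i ∧ Z n ω = j}))) :=
            (Measure.map_map hAm (hGm n)).symm
        _ = Measure.map A (P Ev • volume.restrict (IX i ×ˢ JZ j)) := by rw [hmapν]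
        _ = P Ev • Measure.map A (volume.restrict (IX i ×ˢ JZ j)) := Measure.map_smul _ _ _
        _ = _ := by rw [hkey, smul_smul]
    -- decompose the event into cells
    set Fk : Finset (Fin a × Fin c) := Finset.univ.filter (fun q => ξ q = k) with hFk
    have hdecomp : Ev ∩ {ω | Y n ω = k}
        = ⋃ q : ↥Fk, Ev ∩ {ω | X n ω = (q : Fin a × Fin c).1 ∧ Z n ω = (q : Fin a × Fin c).2} := by
      ext ω
      simp only [Set.mem_inter_iff, Set.mem_setOf_eq, Set.mem_iUnion]
      constructor
      · rintro ⟨hEvω, hYω⟩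
        refine ⟨⟨(X n ω, Z n ω), ?_⟩, hEvω, rfl, rfl⟩
        simp only [hFk, Finset.mem_filter, Finset.mem_univ, true_and]
        rw [← hYdef n ω]; exact hYω
      · rintro ⟨⟨⟨i, j⟩, hq⟩, hEvω, h1, h2⟩
        refine ⟨hEvω, ?_⟩
        rw [hYdef n ω, h1, h2]
        simpa [hFk] using hq
    have hdisj : Pairwise (Function.onFun Disjoint
        (fun q : ↥Fk => Ev ∩ {ω | X n ω = (q : Fin a × Fin c).1 ∧ Z n ω = (q : Fin a × Fin c).2})) := by
      intro q q' hqq'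
      rw [Function.onFun, Set.disjoint_left]
      rintro ω ⟨_, h1, h2⟩ ⟨_, h1', h2'⟩
      exact hqq' (Subtype.ext (Prod.ext (h1 ▸ h1') (h2 ▸ h2')))
    have hsum : ∑ q : ↥Fk, Measure.map (fun ω => (Θ (n+1) ω, Φ (n+1) ω))
          (P.restrict (Ev ∩ {ω | X n ω = (q : Fin a × Fin c).1 ∧ Z n ω = (q : Fin a × Fin c).2}))
        = (P Ev * ENNReal.ofReal (PY k)) • unif := by
      have hq0 : ∀ i, 0 ≤ qk i := fun i => div_nonneg (hPXY0 _) (hPY0 k)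
      have hq1 : ∑ i, qk i = 1 := by
        rw [hqk]
        rw [← Finset.sum_div, ← hPY k, div_self (ne_of_gt hPYk)]
      have hstep1 : ∑ q : ↥Fk, Measure.map (fun ω => (Θ (n+1) ω, Φ (n+1) ω))
          (P.restrict (Ev ∩ {ω | X n ω = (q : Fin a × Fin c).1 ∧ Z n ω = (q : Fin a × Fin c).2}))
          = ∑ q ∈ Fk, (P Ev * ENNReal.ofReal (PX q.1 * PZ q.2 * PY k / PXY (q.1, k))) •
              volume.restrict (Set.Ioo (cum qk q.1) (cum qk q.1 + qk q.1) ×ˢ Set.Ioo (0:ℝ) 1) := by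
        rw [← Finset.sum_coe_sort Fk]
        refine Finset.sum_congr rfl fun q _ => ?_
        have hq := q.2
        simp only [hFk, Finset.mem_filter] at hq
        exact piece (q : Fin a × Fin c).1 (q : Fin a × Fin c).2 (by
          rw [Prod.mk.eta]; exact hq.2)
      rw [hstep1]
      have hstep2 : ∑ q ∈ Fk, (P Ev * ENNReal.ofReal (PX q.1 * PZ q.2 * PY k / PXY (q.1, k))) •
            volume.restrict (Set.Ioo (cum qk q.1) (cum qk q.1 + qk q.1) ×ˢ Set.Ioo (0:ℝ) 1)
          = ∑ i : Fin a, (P Ev * ENNReal.ofReal (PY k)) •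
              volume.restrict (Set.Ioo (cum qk i) (cum qk i + qk i) ×ˢ Set.Ioo (0:ℝ) 1) := by
        rw [hFk, Finset.sum_filter, Fintype.sum_prod_type]
        refine Finset.sum_congr rfl fun i _ => ?_
        dsimp only
        rw [← Finset.sum_filter]
        by_cases hPXYik : PXY (i, k) = 0
        · have hqk0 : qk i = 0 := by rw [hqk]; simp [hPXYik]
          have hstrip : volume.restrict
              (Set.Ioo (cum qk i) (cum qk i + qk i) ×ˢ Set.Ioo (0:ℝ) 1) = 0 := by
            rw [hqk0, add_zero, Set.Ioo_self, Set.empty_prod, Measure.restrict_empty]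
          rw [hstrip]
          simp
        · rw [← Finset.sum_smul]
          congr 1
          rw [← Finset.mul_sum, ← ENNReal.ofReal_sum_of_nonneg (fun j _ =>
            div_nonneg (mul_nonneg (mul_nonneg (hPX0 i) (hPZ0 j)) (hPY0 k)) (hPXY0 _))]
          congr 2
          have hterms : ∀ j ∈ Finset.univ.filter (fun j => ξ (i, j) = k),
              PX i * PZ j * PY k / PXY (i, k) = PX i * PZ j * (PY k / PXY (i, k)) :=
            fun j _ => by ring
          rw [Finset.sum_congr rfl hterms, ← Finset.sum_mul, hξ i k]
          field_simp
      rw [hstep2, ← Finset.smul_sum, Stmt3Aux.partition_strips qk hq0 hq1, hunif]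
    have hbig : Measure.map (fun ω => (Θ (n+1) ω, Φ (n+1) ω)) (P.restrict (Ev ∩ {ω | Y n ω = k}))
        = (P Ev * ENNReal.ofReal (PY k)) • unif := by
      rw [hdecomp, Stmt3Aux.map_restrict_iUnion P (hGm (n+1))
        (fun q => hEv.inter (hSmeas _ _)) hdisj, hsum]
    have huniv : unif Set.univ = 1 := by
      rw [hunif, Measure.restrict_apply_univ, Measure.volume_eq_prod, Measure.prod_prod]
      simp
    have hcoef : P (Ev ∩ {ω | Y n ω = k}) = P Ev * ENNReal.ofReal (PY k) := by
      have h := congrArg (fun (μ : Measure (ℝ × ℝ)) => μ Set.univ) hbig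
      simpa [Measure.map_apply (hGm (n+1)) MeasurableSet.univ,
        Measure.restrict_apply_univ, huniv] using h
    rw [hbig, hcoef]

  -- measurability of the history events
  have hEm : ∀ (n : ℕ) (y : Fin n → Fin b), MeasurableSet {ω | ∀ l : Fin n, Y l.val ω = y l} := by
    intro n y
    have h : {ω | ∀ l : Fin n, Y l.val ω = y l} = ⋂ l : Fin n, Y l.val ⁻¹' {y l} := by
      ext ω; simp [Set.mem_iInter]
    rw [h]
    exact MeasurableSet.iInter fun l => (hYm l.val) (measurableSet_singleton _)
  -- Lemma 3(a)-style invariant, conditioned on the past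
  have inv : ∀ (n : ℕ) (y : Fin n → Fin b),
      Measure.map (fun ω => (Θ n ω, Φ n ω)) (P.restrict {ω | ∀ l : Fin n, Y l.val ω = y l})
        = P {ω | ∀ l : Fin n, Y l.val ω = y l} • unif := by
    intro n
    induction n with
    | zero =>
      intro y
      have hE : {ω : Ω | ∀ l : Fin 0, Y l.val ω = y l} = Set.univ := by
        ext ω; simp
      rw [hE, Measure.restrict_univ, measure_univ, one_smul, hinit]
    | succ n ih =>
      intro y
      have hdec : {ω | ∀ l : Fin (n+1), Y l.val ω = y l}
          = {ω | ∀ l : Fin n, Y l.val ω = y l.castSucc} ∩ {ω | Y n ω = y (Fin.last n)} := by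
        ext ω
        simp only [Set.mem_setOf_eq, Set.mem_inter_iff]
        constructor
        · intro h
          exact ⟨fun l => h l.castSucc, h (Fin.last n)⟩
        · rintro ⟨h1, h2⟩ l
          refine Fin.lastCases ?_ ?_ l
          · exact h2
          · exact fun l' => h1 l'
      rw [hdec]
      exact step n _ (hEm n _) (ih _) _
  -- the unconditional marginal of the driving pair
  have marg : ∀ n, Measure.map (fun ω => (Θ n ω, Φ n ω)) P = unif := by
    intro n
    induction n with
    | zero => exact hinit
    | succ n ih =>
      have hstepn : ∀ k, Measure.map (fun ω => (Θ (n+1) ω, Φ (n+1) ω))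
          (P.restrict (Set.univ ∩ {ω | Y n ω = k}))
          = P (Set.univ ∩ {ω | Y n ω = k}) • unif :=
        step n Set.univ MeasurableSet.univ
          (by rw [Measure.restrict_univ, measure_univ, one_smul, ih])
      have hu : (Set.univ : Set Ω) = ⋃ k : Fin b, (Set.univ ∩ {ω | Y n ω = k}) := by
        ext ω; simp
      have hdisj : Pairwise (Function.onFun Disjoint
          (fun k : Fin b => Set.univ ∩ {ω | Y n ω = k})) := by
        intro k k' hkk'
        rw [Function.onFun, Set.disjoint_left]
        rintro ω ⟨_, h1⟩ ⟨_, h2⟩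
        exact hkk' (h1 ▸ h2)
      have hmeas : ∀ k : Fin b, MeasurableSet (Set.univ ∩ {ω | Y n ω = k}) :=
        fun k => MeasurableSet.univ.inter ((hYm n) (measurableSet_singleton k))
      have hsum1 : ∑ k : Fin b, P (Set.univ ∩ {ω | Y n ω = k}) = 1 := by
        rw [← tsum_fintype (L := SummationFilter.unconditional _), ← measure_iUnion hdisj hmeas, ← hu, measure_univ]
      calc Measure.map (fun ω => (Θ (n+1) ω, Φ (n+1) ω)) P
          = Measure.map (fun ω => (Θ (n+1) ω, Φ (n+1) ω))
              (P.restrict (⋃ k : Fin b, Set.univ ∩ {ω | Y n ω = k})) := by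
            rw [← hu, Measure.restrict_univ]
        _ = ∑ k : Fin b, Measure.map (fun ω => (Θ (n+1) ω, Φ (n+1) ω))
              (P.restrict (Set.univ ∩ {ω | Y n ω = k})) :=
            Stmt3Aux.map_restrict_iUnion P (hGm (n+1)) hmeas hdisj
        _ = ∑ k : Fin b, P (Set.univ ∩ {ω | Y n ω = k}) • unif :=
            Finset.sum_congr rfl fun k _ => hstepn k
        _ = (∑ k : Fin b, P (Set.univ ∩ {ω | Y n ω = k})) • unif := by
            rw [Finset.sum_smul]
        _ = unif := by rw [hsum1, one_smul]
  have cellm : ∀ i j, MeasurableSet (IX i ×ˢ JZ j) := by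
    intro i j; rw [hIX, hJZ]; exact measurableSet_Ioo.prod measurableSet_Ioo
  have hXset : ∀ (n : ℕ) i j, {ω | X n ω = i ∧ Z n ω = j}
      =ᵐ[P] (fun ω => (Θ n ω, Φ n ω)) ⁻¹' (IX i ×ˢ JZ j) := by
    intro n i j
    rw [Filter.eventuallyEq_set]
    filter_upwards [hXae n, hZae n] with ω h1 h2
    simp only [Set.mem_setOf_eq, Set.mem_preimage, Set.mem_prod]
    rw [h1 i, h2 j]
  have hcellvol : ∀ i j, unif (IX i ×ˢ JZ j) = ENNReal.ofReal (PX i * PZ j) := by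
    intro i j
    rw [hunif, Measure.restrict_apply (cellm i j),
      Set.inter_eq_self_of_subset_left (hcellsub i j), Measure.volume_eq_prod,
      Measure.prod_prod, hIX, hJZ]
    have l1 : cum PX i + PX i - cum PX i = PX i := by ring
    have l2 : cum PZ j + PZ j - cum PZ j = PZ j := by ring
    simp only [Real.volume_Ioo]
    rw [l1, l2, ← ENNReal.ofReal_mul (hPX0 i)]
  have hPjoint : ∀ (n : ℕ) i j, P {ω | X n ω = i ∧ Z n ω = j}
      = ENNReal.ofReal (PX i * PZ j) := by
    intro n i j
    rw [measure_congr (hXset n i j), ← Measure.map_apply (hGm n) (cellm i j), marg n,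
      hcellvol]
  have concl1 : ∀ (n : ℕ) i k, P {ω | X n ω = i ∧ Y n ω = k}
      = ENNReal.ofReal (PXY (i, k)) := by
    intro n i k
    have hset : {ω | X n ω = i ∧ Y n ω = k}
        = ⋃ j ∈ Finset.univ.filter (fun j => ξ (i, j) = k), {ω | X n ω = i ∧ Z n ω = j} := by
      ext ω
      simp only [Set.mem_setOf_eq, Set.mem_iUnion, Finset.mem_filter, Finset.mem_univ, true_and]
      constructor
      · rintro ⟨h1, h2⟩
        rw [hYdef n ω, h1] at h2
        exact ⟨Z n ω, h2, h1, rfl⟩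
      · rintro ⟨j, hj, h1, h2⟩
        exact ⟨h1, by rw [hYdef n ω, h1, h2, hj]⟩
    have hd : Set.PairwiseDisjoint
        (↑(Finset.univ.filter (fun j => ξ (i, j) = k)))
        (fun j => {ω | X n ω = i ∧ Z n ω = j}) := by
      intro j _ j' _ hjj'
      rw [Function.onFun, Set.disjoint_left]
      rintro ω ⟨_, h1⟩ ⟨_, h2⟩
      exact hjj' (h1 ▸ h2)
    rw [hset, measure_biUnion_finset hd (fun j _ => hSmeasAll n i j)]
    rw [Finset.sum_congr rfl (fun j _ => hPjoint n i j),
      ← ENNReal.ofReal_sum_of_nonneg (fun j _ => mul_nonneg (hPX0 i) (hPZ0 j)), hξ i k]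
  -- independence
  have hVm : ∀ n : ℕ, Measurable (fun ω (l : Fin n) => Y l.val ω) := fun n =>
    measurable_pi_lambda _ fun l => hYm l.val
  refine ⟨concl1, fun n => ?_⟩
  rw [ProbabilityTheory.indepFun_iff_map_prod_eq_prod_map_map (hXm n).aemeasurable
    (hVm n).aemeasurable]
  apply Measure.ext_of_singleton
  rintro ⟨i, y⟩
  have hE := hEm n y
  have hXs : MeasurableSet {ω | X n ω = i} := (hXm n) (measurableSet_singleton i)
  have hstripm : MeasurableSet (IX i ×ˢ Set.Ioo (0:ℝ) 1) := by
    rw [hIX]; exact measurableSet_Ioo.prod measurableSet_Ioo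
  have hstrip_sub : IX i ×ˢ Set.Ioo (0:ℝ) 1 ⊆ Set.Ioo (0:ℝ) 1 ×ˢ Set.Ioo (0:ℝ) 1 :=
    Set.prod_mono (Stmt3Aux.cell_subset hPX0 hPX1 i) le_rfl
  have hXstrip : {ω | X n ω = i}
      =ᵐ[P] (fun ω => (Θ n ω, Φ n ω)) ⁻¹' (IX i ×ˢ Set.Ioo (0:ℝ) 1) := by
    rw [Filter.eventuallyEq_set]
    filter_upwards [hXae n, hZdef n] with ω h1 h2
    simp only [Set.mem_setOf_eq, Set.mem_preimage, Set.mem_prod]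
    rw [h1 i]
    have hΦ : Φ n ω ∈ Set.Ioo (0:ℝ) 1 := Stmt3Aux.cell_subset hPZ0 hPZ1 _ h2
    tauto
  have hunifstrip : unif (IX i ×ˢ Set.Ioo (0:ℝ) 1) = ENNReal.ofReal (PX i) := by
    rw [hunif, Measure.restrict_apply hstripm, Set.inter_eq_self_of_subset_left hstrip_sub,
      Measure.volume_eq_prod, Measure.prod_prod]
    have l1 : cum PX i + PX i - cum PX i = PX i := by ring
    rw [hIX]
    simp only [Real.volume_Ioo]
    rw [l1]
    simp
  have hPXi : P {ω | X n ω = i} = ENNReal.ofReal (PX i) := by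
    rw [measure_congr hXstrip, ← Measure.map_apply (hGm n) hstripm, marg n, hunifstrip]
  have hL : (Measure.map (fun ω => (X n ω, fun l : Fin n => Y l.val ω)) P) {(i, y)}
      = P ({ω | ∀ l : Fin n, Y l.val ω = y l} ∩ {ω | X n ω = i}) := by
    rw [Measure.map_apply ((hXm n).prodMk (hVm n)) (measurableSet_singleton _)]
    congr 1
    ext ω
    simp only [Set.mem_preimage, Set.mem_singleton_iff, Prod.mk.injEq, Set.mem_inter_iff,
      Set.mem_setOf_eq, funext_iff]
    tauto
  have hjointP : P ({ω | ∀ l : Fin n, Y l.val ω = y l} ∩ {ω | X n ω = i})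
      = P {ω | ∀ l : Fin n, Y l.val ω = y l} * ENNReal.ofReal (PX i) := by
    rw [Set.inter_comm, ← Measure.restrict_apply hXs,
      measure_congr (hXstrip.filter_mono (ae_mono Measure.restrict_le_self)),
      ← Measure.map_apply (hGm n) hstripm, inv n y, Measure.smul_apply, hunifstrip,
      smul_eq_mul]
  have hR : ((Measure.map (X n) P).prod (Measure.map (fun ω (l : Fin n) => Y l.val ω) P))
        {(i, y)}
      = ENNReal.ofReal (PX i) * P {ω | ∀ l : Fin n, Y l.val ω = y l} := by
    rw [← Set.singleton_prod_singleton, Measure.prod_prod,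
      Measure.map_apply (hXm n) (measurableSet_singleton i),
      Measure.map_apply (hVm n) (measurableSet_singleton y)]
    have hv : (fun ω (l : Fin n) => Y l.val ω) ⁻¹' {y} = {ω | ∀ l : Fin n, Y l.val ω = y l} := by
      ext ω; simp [funext_iff]
    have hx : X n ⁻¹' {i} = {ω | X n ω = i} := rfl
    rw [hv, hx, hPXi]
  rw [hL, hjointP, hR, mul_comm]
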